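/- arXiv:1709.01281 — 3 statements merged into one kernel-verified Lean document; each statement's English description precedes it below -/
import Mathlib

section
/- Let n ≥ 1 and p > 1. There exists a constant C₁ > 0, depending only on p, such that for all vectors η, η' ∈ ℝ^n with |η| + |η'| > 0, one has ⟨|η|^{p−2} η − |η'|^{p−2} η', η − η'⟩ ≥ C₁ (|η| + |η'|)^{p−2} |η − η'|². -/
open Real

/-- Tangent-line inequality for the concave function `x ↦ x ^ q`, `0 < q ≤ 1`. -/
private lemma stmt5_tangent {q a b : ℝ} (hq0 : 0 < q) (hq1 : q ≤ 1)
    (ha : 0 < a) (hb : 0 ≤ b) : b ^ q ≤ a ^ q + q * (a ^ q / a * (b - a)) := by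
  have hs : (-1 : ℝ) ≤ b / a - 1 := by
    have : 0 ≤ b / a := div_nonneg hb ha.le
    linarith
  have h := rpow_one_add_le_one_add_mul_self hs hq0.le hq1
  rw [add_sub_cancel] at h
  have h2 := mul_le_mul_of_nonneg_right h (rpow_nonneg ha.le q)
  rw [div_rpow hb ha.le, div_mul_cancel₀ _ (by positivity : (a : ℝ) ^ q ≠ 0)] at h2
  calc b ^ q ≤ (1 + q * (b / a - 1)) * a ^ q := h2
    _ = a ^ q + q * (a ^ q / a * (b - a)) := by field_simp

private lemma stmt5_rpow_succ {x e : ℝ} (hx : 0 ≤ x) (he : e + 1 ≠ 0) :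
    x ^ e * x = x ^ (e + 1) := by
  rcases eq_or_lt_of_le hx with rfl | hx
  · rw [zero_rpow he, mul_zero]
  · rw [rpow_add_one hx.ne']

/-- 1D inequality: for `b ≤ a`, `C₁ (a+b)^{p-2} (a-b) ≤ a^{p-1} - b^{p-1}`. -/
private lemma stmt5_oneD {p a b : ℝ} (hp : 1 < p) (hb : 0 ≤ b) (hba : b ≤ a) (ha : 0 < a) :
    min (p - 1) (2 ^ (1 - p)) * ((a + b) ^ (p - 2) * (a - b)) ≤ a ^ (p - 1) - b ^ (p - 1) := by
  have hab : 0 < a + b := by linarith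
  have hZ : (0 : ℝ) ≤ (a + b) ^ (p - 2) := rpow_nonneg hab.le _
  rcases le_total p 2 with h2 | h2
  · -- 1 < p ≤ 2 : use concavity tangent line
    have htan := stmt5_tangent (q := p - 1) (a := a) (b := b) (by linarith) (by linarith) ha hb
    have hmono : (a + b) ^ (p - 2) ≤ a ^ (p - 2) :=
      rpow_le_rpow_of_nonpos ha (by linarith) (by linarith)
    have hCle : min (p - 1) (2 ^ (1 - p)) ≤ p - 1 := min_le_left _ _
    have hea : a ^ (p - 2) = a ^ (p - 1) / a := by
      rw [eq_div_iff ha.ne', stmt5_rpow_succ ha.le (by intro h; linarith [h] )]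
      ring_nf
    have h1 : min (p - 1) (2 ^ (1 - p)) * ((a + b) ^ (p - 2) * (a - b)) ≤
        (p - 1) * (a ^ (p - 2) * (a - b)) := by
      have hCpos : 0 < min (p - 1) (2 ^ (1 - p)) :=
        lt_min (by linarith) (rpow_pos_of_pos two_pos _)
      have hstep : (a + b) ^ (p - 2) * (a - b) ≤ a ^ (p - 2) * (a - b) :=
        mul_le_mul_of_nonneg_right hmono (by linarith)
      calc min (p - 1) (2 ^ (1 - p)) * ((a + b) ^ (p - 2) * (a - b))
          ≤ min (p - 1) (2 ^ (1 - p)) * (a ^ (p - 2) * (a - b)) :=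
            mul_le_mul_of_nonneg_left hstep hCpos.le
        _ ≤ (p - 1) * (a ^ (p - 2) * (a - b)) := by
            exact mul_le_mul_of_nonneg_right hCle
              (mul_nonneg (rpow_nonneg ha.le _) (by linarith))
    have h2' : (p - 1) * (a ^ (p - 2) * (a - b)) ≤ a ^ (p - 1) - b ^ (p - 1) := by
      rw [hea]; nlinarith [htan]
    linarith
  · -- p ≥ 2
    have hCle : min (p - 1) (2 ^ (1 - p)) ≤ 2 ^ (1 - p) := min_le_right _ _
    have hCpos : 0 < min (p - 1) (2 ^ (1 - p)) :=
      lt_min (by linarith) (rpow_pos_of_pos two_pos _)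
    have hmono : (a + b) ^ (p - 2) ≤ 2 ^ (p - 2) * a ^ (p - 2) := by
      calc (a + b) ^ (p - 2) ≤ (2 * a) ^ (p - 2) :=
            rpow_le_rpow hab.le (by linarith) (by linarith)
        _ = 2 ^ (p - 2) * a ^ (p - 2) := mul_rpow (by norm_num) ha.le
    have hpow : (2 : ℝ) ^ (1 - p) * 2 ^ (p - 2) = 1 / 2 := by
      rw [← rpow_add two_pos, show (1 : ℝ) - p + (p - 2) = -1 by ring, rpow_neg_one]
      norm_num
    have key : (1 / 2 : ℝ) * (a ^ (p - 2) * (a - b)) ≤ a ^ (p - 1) - b ^ (p - 1) := by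
      have e1 : a ^ (p - 2) * a = a ^ (p - 1) := by
        rw [stmt5_rpow_succ ha.le (by intro h; linarith)]; ring_nf
      have e2 : b ^ (p - 2) * b = b ^ (p - 1) := by
        rw [stmt5_rpow_succ hb (by intro h; linarith)]; ring_nf
      have hb1 : b ^ (p - 1) ≤ a ^ (p - 1) := rpow_le_rpow hb hba (by linarith)
      have hb2 : b ^ (p - 2) * b ≤ a ^ (p - 2) * b :=
        mul_le_mul_of_nonneg_right (rpow_le_rpow hb hba (by linarith)) hb
      nlinarith [hb1, hb2, e1, e2]
    have step : min (p - 1) (2 ^ (1 - p)) * ((a + b) ^ (p - 2) * (a - b)) ≤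
        (1 / 2 : ℝ) * (a ^ (p - 2) * (a - b)) := by
      have hstep : (a + b) ^ (p - 2) * (a - b) ≤ (2 ^ (p - 2) * a ^ (p - 2)) * (a - b) :=
        mul_le_mul_of_nonneg_right hmono (by linarith)
      calc min (p - 1) (2 ^ (1 - p)) * ((a + b) ^ (p - 2) * (a - b))
          ≤ 2 ^ (1 - p) * ((2 ^ (p - 2) * a ^ (p - 2)) * (a - b)) := by
            apply mul_le_mul hCle hstep _ (by positivity)
            have : (0:ℝ) ≤ (a + b) ^ (p - 2) := hZ
            nlinarith [hZ]
        _ = (2 ^ (1 - p) * 2 ^ (p - 2)) * (a ^ (p - 2) * (a - b)) := by ring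
        _ = (1 / 2 : ℝ) * (a ^ (p - 2) * (a - b)) := by rw [hpow]
    linarith

/-- slope bound: `2 C₁ (a+b)^{p-2} ≤ a^{p-2} + b^{p-2}` for `0 < b ≤ a`. -/
private lemma stmt5_slope {p a b : ℝ} (hp : 1 < p) (hb : 0 < b) (hba : b ≤ a) :
    2 * min (p - 1) (2 ^ (1 - p)) * (a + b) ^ (p - 2) ≤ a ^ (p - 2) + b ^ (p - 2) := by
  have ha : 0 < a := lt_of_lt_of_le hb hba
  have hab : 0 < a + b := by linarith
  have hZ : (0 : ℝ) ≤ (a + b) ^ (p - 2) := rpow_nonneg hab.le _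
  rcases le_total p 2 with h2 | h2
  · have hC1 : min (p - 1) (2 ^ (1 - p)) ≤ 1 := le_trans (min_le_left _ _) (by linarith)
    have hCpos : 0 < min (p - 1) (2 ^ (1 - p)) :=
      lt_min (by linarith) (rpow_pos_of_pos two_pos _)
    have hma : (a + b) ^ (p - 2) ≤ a ^ (p - 2) :=
      rpow_le_rpow_of_nonpos ha (by linarith) (by linarith)
    have hmb : (a + b) ^ (p - 2) ≤ b ^ (p - 2) :=
      rpow_le_rpow_of_nonpos hb (by linarith) (by linarith)
    nlinarith [hZ, hma, hmb, hC1, hCpos]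
  · have hCle : min (p - 1) (2 ^ (1 - p)) ≤ 2 ^ (1 - p) := min_le_right _ _
    have hCpos : 0 < min (p - 1) (2 ^ (1 - p)) :=
      lt_min (by linarith) (rpow_pos_of_pos two_pos _)
    have hmono : (a + b) ^ (p - 2) ≤ 2 ^ (p - 2) * a ^ (p - 2) := by
      calc (a + b) ^ (p - 2) ≤ (2 * a) ^ (p - 2) :=
            rpow_le_rpow hab.le (by linarith) (by linarith)
        _ = 2 ^ (p - 2) * a ^ (p - 2) := mul_rpow (by norm_num) ha.le
    have hpow : (2 : ℝ) ^ (1 - p) * 2 ^ (p - 2) = 1 / 2 := by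
      rw [← rpow_add two_pos, show (1 : ℝ) - p + (p - 2) = -1 by ring, rpow_neg_one]
      norm_num
    have hbn : (0:ℝ) ≤ b ^ (p - 2) := rpow_nonneg hb.le _
    have h2p : (0:ℝ) < 2 ^ (p - 2) := rpow_pos_of_pos two_pos _
    have h1p : (0:ℝ) < 2 ^ (1 - p) := rpow_pos_of_pos two_pos _
    calc 2 * min (p - 1) (2 ^ (1 - p)) * (a + b) ^ (p - 2)
        ≤ 2 * (2 ^ (1 - p)) * (2 ^ (p - 2) * a ^ (p - 2)) := by
          apply mul_le_mul (by nlinarith) hmono hZ (by positivity)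
      _ = 2 * (2 ^ (1 - p) * 2 ^ (p - 2)) * a ^ (p - 2) := by ring
      _ = a ^ (p - 2) := by rw [hpow]; ring
      _ ≤ a ^ (p - 2) + b ^ (p - 2) := by linarith

/-- Scalar form (ordered version `b ≤ a`). -/
private lemma stmt5_scalar {p : ℝ} (hp : 1 < p) (a b t : ℝ) (hb : 0 ≤ b) (hba : b ≤ a)
    (hab : 0 < a + b) (ht : |t| ≤ a * b) :
    min (p - 1) (2 ^ (1 - p)) * (a + b) ^ (p - 2) * (a ^ 2 + b ^ 2 - 2 * t) ≤
      a ^ (p - 2) * a ^ 2 + b ^ (p - 2) * b ^ 2 - (a ^ (p - 2) + b ^ (p - 2)) * t := by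
  have ha : 0 < a := by
    rcases lt_or_ge 0 a with h | h
    · exact h
    · exfalso; nlinarith
  obtain ⟨ht1, ht2⟩ := abs_le.mp ht
  rcases eq_or_lt_of_le hb with rfl | hb'
  · -- b = 0, hence t = 0
    have htz : t = 0 := le_antisymm (by linarith) (by linarith)
    subst htz
    have hC1 : min (p - 1) (2 ^ (1 - p)) ≤ 1 :=
      le_trans (min_le_right _ _) (rpow_le_one_of_one_le_of_nonpos (by norm_num) (by linarith))
    have hCpos : 0 < min (p - 1) (2 ^ (1 - p)) :=
      lt_min (by linarith) (rpow_pos_of_pos two_pos _)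
    simp only [add_zero, mul_zero, sub_zero]
    have hzp : (0:ℝ) ^ (p - 2) * (0:ℝ) ^ 2 = 0 := by norm_num
    rw [hzp, add_zero]
    norm_num
    nlinarith [mul_nonneg (rpow_nonneg ha.le (p - 2)) (sq_nonneg a), hC1, hCpos]
  · -- 0 < b
    have hC := stmt5_slope (a := a) (b := b) hp hb' hba
    have h1 := stmt5_oneD (a := a) (b := b) hp hb hba ha
    have h1' := mul_le_mul_of_nonneg_right h1 (by linarith : (0:ℝ) ≤ a - b)
    have h2' := mul_le_mul_of_nonneg_right hC (by nlinarith : (0:ℝ) ≤ a * b - t)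
    have ea : a ^ (p - 2) * a = a ^ (p - 1) := by
      rw [stmt5_rpow_succ ha.le (by intro h; linarith)]; ring_nf
    have eb : b ^ (p - 2) * b = b ^ (p - 1) := by
      rw [stmt5_rpow_succ hb (by intro h; linarith)]; ring_nf
    nlinarith [h1', h2', ea, eb]

/-- Scalar form, no ordering assumption. -/
private lemma stmt5_scalar' {p : ℝ} (hp : 1 < p) (a b t : ℝ) (ha : 0 ≤ a) (hb : 0 ≤ b)
    (hab : 0 < a + b) (ht : |t| ≤ a * b) :
    min (p - 1) (2 ^ (1 - p)) * (a + b) ^ (p - 2) * (a ^ 2 + b ^ 2 - 2 * t) ≤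
      a ^ (p - 2) * a ^ 2 + b ^ (p - 2) * b ^ 2 - (a ^ (p - 2) + b ^ (p - 2)) * t := by
  rcases le_total b a with h | h
  · exact stmt5_scalar hp a b t hb h hab ht
  · have := stmt5_scalar hp b a t ha h (by linarith) (by rwa [mul_comm])
    rw [add_comm b a] at this
    linarith

/-- For `p > 1` there is `C₁ > 0`, depending only on `p`, such that for all
`η, η'` in `ℝ^n` (any `n ≥ 1`) with `|η| + |η'| > 0`,
`⟨|η|^{p-2} η − |η'|^{p-2} η', η − η'⟩ ≥ C₁ (|η| + |η'|)^{p-2} |η − η'|²`. -/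
theorem stmt5 (p : ℝ) (hp : 1 < p) :
    ∃ C₁ : ℝ, 0 < C₁ ∧ ∀ (n : ℕ), 1 ≤ n →
      ∀ η η' : EuclideanSpace ℝ (Fin n), 0 < ‖η‖ + ‖η'‖ →
        C₁ * (‖η‖ + ‖η'‖) ^ (p - 2) * ‖η - η'‖ ^ (2 : ℝ) ≤
          (inner ℝ ((‖η‖ ^ (p - 2) : ℝ) • η - (‖η'‖ ^ (p - 2) : ℝ) • η') (η - η') : ℝ) := by
  refine ⟨min (p - 1) (2 ^ (1 - p)),
    lt_min (by linarith) (rpow_pos_of_pos two_pos _), fun n hn η η' hpos => ?_⟩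
  have ht : |(inner ℝ η η' : ℝ)| ≤ ‖η‖ * ‖η'‖ := abs_real_inner_le_norm η η'
  have e1 : (inner ℝ ((‖η‖ ^ (p - 2) : ℝ) • η - (‖η'‖ ^ (p - 2) : ℝ) • η') (η - η') : ℝ) =
      ‖η‖ ^ (p - 2) * ‖η‖ ^ 2 + ‖η'‖ ^ (p - 2) * ‖η'‖ ^ 2 -
        (‖η‖ ^ (p - 2) + ‖η'‖ ^ (p - 2)) * (inner ℝ η η' : ℝ) := by
    simp only [inner_sub_left, inner_sub_right, real_inner_smul_left,
      real_inner_self_eq_norm_sq]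
    rw [real_inner_comm η' η]
    ring
  have e2 : ‖η - η'‖ ^ (2 : ℝ) = ‖η‖ ^ 2 + ‖η'‖ ^ 2 - 2 * (inner ℝ η η' : ℝ) := by
    rw [rpow_two, norm_sub_sq_real]; ring
  rw [e1, e2]
  exact stmt5_scalar' hp ‖η‖ ‖η'‖ (inner ℝ η η') (norm_nonneg _) (norm_nonneg _) hpos ht
end

section
/- Let n ≥ 1 and p > 1. There exists a constant C₂ > 0, depending only on p, such that for all vectors η, η' ∈ ℝ^n with |η| + |η'| > 0, one has | |η|^{p−2} η − |η'|^{p−2} η' | ≤ C₂ (|η| + |η'|)^{p−2} |η − η'|. -/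
open Real

lemma aux1 {q a b : ℝ} (hq1 : 0 ≤ q) (hq2 : q ≤ 1) (hb : 0 < b) (hba : b ≤ a) :
    a ^ q - b ^ q ≤ q * b ^ (q - 1) * (a - b) := by
  have hs : (0:ℝ) ≤ (a - b) / b := div_nonneg (by linarith) hb.le
  have hber := rpow_one_add_le_one_add_mul_self (by linarith : (-1:ℝ) ≤ (a-b)/b) hq1 hq2
  have h1 : 1 + (a - b) / b = a / b := by field_simp; ring
  rw [h1, Real.div_rpow (by linarith) hb.le] at hber
  have hbq : (0:ℝ) < b ^ q := Real.rpow_pos_of_pos hb q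
  have h2 : b ^ (q - 1) = b ^ q / b := by
    rw [Real.rpow_sub hb, Real.rpow_one]
  rw [h2]
  have := mul_le_mul_of_nonneg_right hber hbq.le
  rw [div_mul_cancel₀ _ hbq.ne'] at this
  calc a ^ q - b ^ q ≤ (1 + q * ((a-b)/b)) * b ^ q - b ^ q := by linarith
    _ = q * (b ^ q / b) * (a - b) := by field_simp; ring

lemma aux2 {q a b : ℝ} (hq : 1 ≤ q) (hb : 0 ≤ b) (ha : 0 < a) :
    a ^ q - b ^ q ≤ q * a ^ (q - 1) * (a - b) := by
  have hs : (-1:ℝ) ≤ (b - a) / a := by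
    rw [neg_le, ← neg_div]; exact div_le_one_of_le₀ (by linarith) ha.le
  have hber := one_add_mul_self_le_rpow_one_add hs hq
  have h1 : 1 + (b - a) / a = b / a := by field_simp; ring
  rw [h1, Real.div_rpow hb ha.le] at hber
  have haq : (0:ℝ) < a ^ q := Real.rpow_pos_of_pos ha q
  have h2 : a ^ (q - 1) = a ^ q / a := by
    rw [Real.rpow_sub ha, Real.rpow_one]
  rw [h2]
  have := mul_le_mul_of_nonneg_right hber haq.le
  rw [div_mul_cancel₀ _ haq.ne'] at this
  calc a ^ q - b ^ q ≤ a ^ q - (1 + q * ((b-a)/a)) * a ^ q := by linarith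
    _ = q * (a ^ q / a) * (a - b) := by field_simp; ring

lemma real_key {p a b d L : ℝ} (hp : 1 < p) (ha : 0 < a) (hb : 0 ≤ b) (hba : b ≤ a)
    (habd : a - b ≤ d) (hd0 : 0 ≤ d)
    (hL1 : L ≤ a ^ (p-2) * d + |a ^ (p-2) - b ^ (p-2)| * b)
    (hL2 : L ≤ a ^ (p-2) * a + b ^ (p-2) * b) :
    L ≤ (p + 8) * (a + b) ^ (p-2) * d := by
  have hab : (0:ℝ) < a + b := by linarith
  have habq : (0:ℝ) < (a+b) ^ (p-2) := Real.rpow_pos_of_pos hab _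
  have haq : (0:ℝ) ≤ a ^ (p-2) := Real.rpow_nonneg ha.le _
  rcases le_or_gt 2 p with h2p | h2p
  · -- p ≥ 2
    have hq0 : (0:ℝ) ≤ p - 2 := by linarith
    have hba' : b ^ (p-2) ≤ a ^ (p-2) := Real.rpow_le_rpow hb hba hq0
    rw [abs_of_nonneg (by linarith)] at hL1
    have ht1 : a ^ (p-2) ≤ (a+b) ^ (p-2) := Real.rpow_le_rpow ha.le (by linarith) hq0
    have ht2 : (a ^ (p-2) - b ^ (p-2)) * b ≤ (p-2) * (a+b) ^ (p-2) * d := by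
      rcases eq_or_lt_of_le hb with rfl | hb'
      · rw [mul_zero]; positivity
      · rcases le_or_gt p 3 with h3 | h3
        · have h := aux1 hq0 (by linarith) hb' hba
          have hbq1 : (0:ℝ) ≤ b ^ (p-2-1) := Real.rpow_nonneg hb _
          have hbb : b ^ (p-2-1) * b = b ^ (p-2) := by
            rw [← Real.rpow_add_one hb'.ne' (p-2-1)]; ring_nf
          have hbq : b ^ (p-2) ≤ (a+b) ^ (p-2) := Real.rpow_le_rpow hb (by linarith) hq0
          calc (a ^ (p-2) - b ^ (p-2)) * b ≤ (p-2) * b ^ (p-2-1) * (a-b) * b := by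
                apply mul_le_mul_of_nonneg_right _ hb; nlinarith [mul_nonneg (mul_nonneg (by linarith : (0:ℝ) ≤ p-2) hbq1) (by linarith : (0:ℝ) ≤ a - b)]
            _ = (p-2) * (b ^ (p-2-1) * b) * (a-b) := by ring
            _ = (p-2) * b ^ (p-2) * (a-b) := by rw [hbb]
            _ ≤ (p-2) * (a+b) ^ (p-2) * d := by
                apply mul_le_mul (by nlinarith) habd (by linarith) (by positivity)
        · have h := aux2 (by linarith : (1:ℝ) ≤ p - 2) hb ha
          have haq1 : (0:ℝ) ≤ a ^ (p-2-1) := Real.rpow_nonneg ha.le _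
          have haa : a ^ (p-2-1) * a = a ^ (p-2) := by
            rw [← Real.rpow_add_one ha.ne' (p-2-1)]; ring_nf
          calc (a ^ (p-2) - b ^ (p-2)) * b ≤ (p-2) * a ^ (p-2-1) * (a-b) * a := by
                nlinarith [mul_nonneg (mul_nonneg (by linarith : (0:ℝ) ≤ p-2) haq1) (by linarith : (0:ℝ) ≤ a - b)]
            _ = (p-2) * (a ^ (p-2-1) * a) * (a-b) := by ring
            _ = (p-2) * a ^ (p-2) * (a-b) := by rw [haa]
            _ ≤ (p-2) * (a+b) ^ (p-2) * d := by
                apply mul_le_mul (by nlinarith) habd (by linarith) (by positivity)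
    have : L ≤ (a+b) ^ (p-2) * d + (p-2) * (a+b) ^ (p-2) * d := by
      refine hL1.trans ?_
      gcongr
    refine this.trans ?_
    nlinarith [mul_nonneg habq.le hd0]
  · -- 1 < p < 2
    have hq0 : p - 2 ≤ 0 := by linarith
    -- key fact: a^{p-2} ≤ 2 (a+b)^{p-2}
    have hKA : a ^ (p-2) ≤ 2 * (a+b) ^ (p-2) := by
      have h1 : (2*a) ^ (p-2) ≤ (a+b) ^ (p-2) :=
        Real.rpow_le_rpow_of_nonpos hab (by linarith) hq0
      have h2 : (2*a) ^ (p-2) = 2 ^ (p-2) * a ^ (p-2) :=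
        Real.mul_rpow (by norm_num) ha.le
      have h3 : a ^ (p-2) = 2 ^ (2-p) * (2*a) ^ (p-2) := by
        rw [h2, ← mul_assoc, ← Real.rpow_add two_pos]
        norm_num
      have h4 : (2:ℝ) ^ (2-p) ≤ 2 := by
        have := Real.rpow_le_rpow_of_exponent_le (one_le_two) (by linarith : 2 - p ≤ (1:ℝ))
        rwa [Real.rpow_one] at this
      rw [h3]
      calc 2 ^ (2-p) * (2*a) ^ (p-2) ≤ 2 ^ (2-p) * (a+b) ^ (p-2) := by
            apply mul_le_mul_of_nonneg_left h1 (by positivity)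
        _ ≤ 2 * (a+b) ^ (p-2) := by
            apply mul_le_mul_of_nonneg_right h4 habq.le
      -- done
    rcases le_or_gt a (2*d) with hcase | hcase
    · -- d large: use hL2
      have hbb : b ^ (p-2) * b ≤ a ^ (p-2) * a := by
        rcases eq_or_lt_of_le hb with rfl | hb'
        · rw [Real.zero_rpow (by linarith : p - 2 ≠ 0), zero_mul]; positivity
        · rw [← Real.rpow_add_one hb'.ne' (p-2), ← Real.rpow_add_one ha.ne' (p-2)]
          exact Real.rpow_le_rpow hb hba (by linarith)
      have : L ≤ 2 * (a ^ (p-2) * a) := by linarith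
      refine this.trans ?_
      calc 2 * (a ^ (p-2) * a) ≤ 2 * (a ^ (p-2) * (2*d)) := by
            apply mul_le_mul_of_nonneg_left (mul_le_mul_of_nonneg_left hcase haq) (by norm_num)
        _ = 4 * a ^ (p-2) * d := by ring
        _ ≤ 4 * (2 * (a+b) ^ (p-2)) * d := by
            apply mul_le_mul_of_nonneg_right (mul_le_mul_of_nonneg_left hKA (by norm_num)) hd0
        _ = 8 * (a+b) ^ (p-2) * d := by ring
        _ ≤ (p + 8) * (a+b) ^ (p-2) * d := by
            apply mul_le_mul_of_nonneg_right (mul_le_mul_of_nonneg_right (by linarith) habq.le) hd0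
    · -- d small: b > a/2 > 0
      have hb' : 0 < b := by linarith
      have hab' : a ^ (p-2) ≤ b ^ (p-2) := Real.rpow_le_rpow_of_nonpos hb' hba hq0
      rw [abs_of_nonpos (by linarith), neg_sub] at hL1
      -- term2 bound: (b^{p-2} - a^{p-2}) * b ≤ (2-p) * (a-b) * a^{p-2}
      have hterm2 : (b ^ (p-2) - a ^ (p-2)) * b ≤ (2-p) * (a-b) * a ^ (p-2) := by
        have hA : (0:ℝ) < a ^ (2-p) := Real.rpow_pos_of_pos ha _
        have hB : (0:ℝ) < b ^ (2-p) := Real.rpow_pos_of_pos hb' _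
        have hra : a ^ (p-2) = (a ^ (2-p))⁻¹ := by
          rw [← Real.rpow_neg ha.le]; ring_nf
        have hrb : b ^ (p-2) = (b ^ (2-p))⁻¹ := by
          rw [← Real.rpow_neg hb'.le]; ring_nf
        rw [hra, hrb]
        have h := aux1 (by linarith : (0:ℝ) ≤ 2-p) (by linarith) hb' hba
        have hbb : b ^ (2-p-1) * b = b ^ (2-p) := by
          rw [← Real.rpow_add_one hb'.ne' (2-p-1)]; ring_nf
        -- from h: a^{2-p} - b^{2-p} ≤ (2-p) b^{2-p-1}(a-b); multiply by b:
        have h2 : (a ^ (2-p) - b ^ (2-p)) * b ≤ (2-p) * (a-b) * b ^ (2-p) := by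
          calc (a ^ (2-p) - b ^ (2-p)) * b ≤ (2-p) * b ^ (2-p-1) * (a-b) * b :=
                mul_le_mul_of_nonneg_right h hb
            _ = (2-p) * (a-b) * (b ^ (2-p-1) * b) := by ring
            _ = (2-p) * (a-b) * b ^ (2-p) := by rw [hbb]
        rw [inv_sub_inv hB.ne' hA.ne']
        rw [div_mul_eq_mul_div, div_le_iff₀ (by positivity)]
        calc (a ^ (2-p) - b ^ (2-p)) * b ≤ (2-p) * (a-b) * b ^ (2-p) := h2
          _ = (2-p) * (a-b) * (a ^ (2-p))⁻¹ * (a ^ (2-p) * b ^ (2-p)) := by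
              field_simp
          _ = (2-p) * (a-b) * (a ^ (2-p))⁻¹ * (b ^ (2-p) * a ^ (2-p)) := by ring
      have hterm2' : (b ^ (p-2) - a ^ (p-2)) * b ≤ 2 * (a+b) ^ (p-2) * d := by
        refine hterm2.trans ?_
        calc (2-p) * (a-b) * a ^ (p-2) ≤ 1 * d * a ^ (p-2) := by
              apply mul_le_mul_of_nonneg_right _ haq
              nlinarith
          _ = a ^ (p-2) * d := by ring
          _ ≤ 2 * (a+b) ^ (p-2) * d := by
              apply mul_le_mul_of_nonneg_right hKA hd0
      have hterm1 : a ^ (p-2) * d ≤ 2 * (a+b) ^ (p-2) * d :=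
        mul_le_mul_of_nonneg_right hKA hd0
      have : L ≤ 4 * (a+b) ^ (p-2) * d := by linarith
      refine this.trans ?_
      apply mul_le_mul_of_nonneg_right (mul_le_mul_of_nonneg_right (by linarith) habq.le) hd0

lemma vec_key (p : ℝ) (hp : 1 < p) {n : ℕ} (η η' : EuclideanSpace ℝ (Fin n))
    (hle : ‖η'‖ ≤ ‖η‖) (hpos : 0 < ‖η‖ + ‖η'‖) :
    ‖(‖η‖ ^ (p - 2) : ℝ) • η - (‖η'‖ ^ (p - 2) : ℝ) • η'‖ ≤
      (p + 8) * (‖η‖ + ‖η'‖) ^ (p - 2) * ‖η - η'‖ := by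
  have ha : 0 < ‖η‖ := by
    rcases hle.lt_or_eq with h | h
    · exact (norm_nonneg _).trans_lt h
    · rw [← h] at hpos ⊢; linarith
  set x : ℝ := ‖η‖ ^ (p - 2) with hx
  set y : ℝ := ‖η'‖ ^ (p - 2) with hy
  have hx0 : 0 ≤ x := Real.rpow_nonneg (norm_nonneg _) _
  have hy0 : 0 ≤ y := Real.rpow_nonneg (norm_nonneg _) _
  apply real_key hp ha (norm_nonneg η') hle (norm_sub_norm_le η η') (norm_nonneg _)
  · have hdec : x • η - y • η' = x • (η - η') + (x - y) • η' := by
      rw [smul_sub, sub_smul]; abel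
    calc ‖x • η - y • η'‖ = ‖x • (η - η') + (x - y) • η'‖ := by rw [hdec]
      _ ≤ ‖x • (η - η')‖ + ‖(x - y) • η'‖ := norm_add_le _ _
      _ = |x| * ‖η - η'‖ + |x - y| * ‖η'‖ := by
          rw [norm_smul, norm_smul, Real.norm_eq_abs, Real.norm_eq_abs]
      _ = ‖η‖ ^ (p-2) * ‖η - η'‖ + |‖η‖ ^ (p-2) - ‖η'‖ ^ (p-2)| * ‖η'‖ := by
          rw [abs_of_nonneg hx0]
  · calc ‖x • η - y • η'‖ ≤ ‖x • η‖ + ‖y • η'‖ := norm_sub_le _ _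
      _ = |x| * ‖η‖ + |y| * ‖η'‖ := by
          rw [norm_smul, norm_smul, Real.norm_eq_abs, Real.norm_eq_abs]
      _ = ‖η‖ ^ (p-2) * ‖η‖ + ‖η'‖ ^ (p-2) * ‖η'‖ := by
          rw [abs_of_nonneg hx0, abs_of_nonneg hy0]

/-- For `p > 1` there is `C₂ > 0`, depending only on `p`, such that for all
`η, η'` in `ℝ^n` (any `n ≥ 1`) with `|η| + |η'| > 0`,
`| |η|^{p-2} η − |η'|^{p-2} η' | ≤ C₂ (|η| + |η'|)^{p-2} |η − η'|`. -/
theorem stmt6 (p : ℝ) (hp : 1 < p) :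
    ∃ C₂ : ℝ, 0 < C₂ ∧ ∀ (n : ℕ), 1 ≤ n →
      ∀ η η' : EuclideanSpace ℝ (Fin n), 0 < ‖η‖ + ‖η'‖ →
        ‖(‖η‖ ^ (p - 2) : ℝ) • η - (‖η'‖ ^ (p - 2) : ℝ) • η'‖ ≤
          C₂ * (‖η‖ + ‖η'‖) ^ (p - 2) * ‖η - η'‖ := by
  refine ⟨p + 8, by linarith, fun n _ η η' hpos => ?_⟩
  rcases le_total ‖η'‖ ‖η‖ with h | h
  · exact vec_key p hp η η' h hpos
  · have key := vec_key p hp η' η h (by linarith)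
    calc ‖(‖η‖ ^ (p - 2) : ℝ) • η - (‖η'‖ ^ (p - 2) : ℝ) • η'‖
        = ‖(‖η'‖ ^ (p - 2) : ℝ) • η' - (‖η‖ ^ (p - 2) : ℝ) • η‖ := norm_sub_rev _ _
      _ ≤ (p + 8) * (‖η'‖ + ‖η‖) ^ (p - 2) * ‖η' - η‖ := key
      _ = (p + 8) * (‖η‖ + ‖η'‖) ^ (p - 2) * ‖η - η'‖ := by
          rw [add_comm ‖η'‖, norm_sub_rev]
end

section
/- Let n ≥ 1 and 1 < p ≤ 2. There exists a constant C₄ > 0, depending only on p, such that for all vectors η, η' ∈ ℝ^n with |η| + |η'| > 0, one has | |η|^{p−2} η − |η'|^{p−2} η' | ≤ C₄ |η − η'|^{p−1}. -/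
open Real Set NNReal RealInnerProductSpace

-- subadditivity of rpow with exponent in [0,1]
private lemma sub8_subadd {q : ℝ} (hq0 : 0 ≤ q) (hq1 : q ≤ 1) {x y : ℝ} (hx : 0 ≤ x) (hy : 0 ≤ y) :
    (x + y) ^ q ≤ x ^ q + y ^ q := by
  have h := NNReal.rpow_add_le_add_rpow x.toNNReal y.toNNReal hq0 hq1
  have hxy : ((x.toNNReal + y.toNNReal : ℝ≥0) : ℝ) = x + y := by
    simp [Real.coe_toNNReal _ hx, Real.coe_toNNReal _ hy]
  calc (x + y) ^ q = (((x.toNNReal + y.toNNReal : ℝ≥0) : ℝ)) ^ q := by rw [hxy]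
    _ = (((x.toNNReal + y.toNNReal) ^ q : ℝ≥0) : ℝ) := by
        rw [NNReal.coe_rpow]
    _ ≤ ((x.toNNReal ^ q + y.toNNReal ^ q : ℝ≥0) : ℝ) := by exact_mod_cast h
    _ = x ^ q + y ^ q := by
        push_cast [NNReal.coe_rpow, Real.coe_toNNReal _ hx, Real.coe_toNNReal _ hy]
        ring

-- |s^q - t^q| ≤ |s - t|^q for s,t ≥ 0
private lemma sub8_A {q : ℝ} (hq0 : 0 ≤ q) (hq1 : q ≤ 1) {s t : ℝ} (hs : 0 ≤ s) (ht : 0 ≤ t) :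
    |s ^ q - t ^ q| ≤ |s - t| ^ q := by
  wlog h : t ≤ s generalizing s t
  · rw [abs_sub_comm, abs_sub_comm s t]; exact this ht hs (le_of_not_ge h)
  have h1 : s ^ q ≤ (s - t) ^ q + t ^ q := by
    have := sub8_subadd hq0 hq1 (sub_nonneg.2 h) ht
    rwa [sub_add_cancel] at this
  have h2 : t ^ q ≤ s ^ q := Real.rpow_le_rpow ht h hq0
  rw [abs_of_nonneg (sub_nonneg.2 h2), abs_of_nonneg (sub_nonneg.2 h)]
  linarith

-- s^q + t^q ≤ 2^(1-q) (s+t)^q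
private lemma sub8_B {q : ℝ} (hq0 : 0 ≤ q) (hq1 : q ≤ 1) {s t : ℝ} (hs : 0 ≤ s) (ht : 0 ≤ t) :
    s ^ q + t ^ q ≤ 2 ^ (1 - q) * (s + t) ^ q := by
  have hcc := (Real.concaveOn_rpow hq0 hq1).2 (mem_Ici.2 hs) (mem_Ici.2 ht)
    (by norm_num : (0:ℝ) ≤ 1/2) (by norm_num : (0:ℝ) ≤ 1/2) (by norm_num)
  simp only [smul_eq_mul] at hcc
  have key : (1/2 : ℝ) * (s ^ q + t ^ q) ≤ ((1/2) * (s + t)) ^ q := by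
    calc (1/2 : ℝ) * (s ^ q + t ^ q) = 1/2 * s ^ q + 1/2 * t ^ q := by ring
      _ ≤ (1/2 * s + 1/2 * t) ^ q := hcc
      _ = ((1/2) * (s + t)) ^ q := by ring_nf
  have hh : ((1/2 : ℝ)) ^ q * (s + t) ^ q = ((1/2) * (s + t)) ^ q := by
    rw [← Real.mul_rpow (by norm_num) (by linarith)]
  rw [← hh] at key
  have h2 : ((1/2 : ℝ)) ^ q = 2 ^ (-q) := by
    rw [Real.div_rpow zero_le_one (by norm_num), Real.one_rpow,
      Real.rpow_neg (by norm_num), one_div]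
  rw [h2] at key
  have h3 : (2:ℝ) ^ (1 - q) = 2 * 2 ^ (-q) := by
    rw [show (1:ℝ) - q = 1 + (-q) by ring, Real.rpow_add (by norm_num), Real.rpow_one]
  rw [h3]
  nlinarith [Real.rpow_nonneg (by linarith : (0:ℝ) ≤ s + t) q,
    Real.rpow_pos_of_pos (by norm_num : (0:ℝ) < 2) (-q)]

-- (x^2)^q = (|x|^q)^2
private lemma sub8_sq {q : ℝ} (x : ℝ) : ((x ^ 2 : ℝ)) ^ q = (|x| ^ q) ^ 2 := by
  rw [← sq_abs, ← Real.rpow_natCast (|x| ^ q) 2, ← Real.rpow_natCast |x| 2,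
    ← Real.rpow_mul (abs_nonneg x), ← Real.rpow_mul (abs_nonneg x)]
  norm_num [mul_comm]

-- key scalar lemma
private lemma sub8_key {q : ℝ} (hq0 : 0 < q) (hq1 : q ≤ 1) {s t c : ℝ} (hs : 0 < s) (ht : 0 < t)
    (hc : |c| ≤ s * t) :
    (s ^ q) ^ 2 + (t ^ q) ^ 2 - 2 * (s ^ (q - 1) * t ^ (q - 1)) * c ≤
      (2 ^ (1 - q)) ^ 2 * (s ^ 2 + t ^ 2 - 2 * c) ^ q := by
  have hst : 0 < s * t := mul_pos hs ht
  set θ : ℝ := (c + s * t) / (2 * (s * t)) with hθdef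
  have hθ0 : 0 ≤ θ := by
    apply div_nonneg _ (by linarith)
    have := abs_le.1 hc
    linarith [this.1]
  have hθ1 : θ ≤ 1 := by
    rw [div_le_one (by linarith)]
    have := abs_le.1 hc
    linarith [this.2]
  have hcθ : c = (2 * θ - 1) * (s * t) := by
    field_simp [hθdef]
    have h2 : θ * (2 * (s * t)) = c + s * t := by
      rw [hθdef]; exact div_mul_cancel₀ _ (by positivity)
    linarith
  have hsq : s ^ (q - 1) * s = s ^ q := by
    rw [← Real.rpow_add_one hs.ne' (q - 1)]; ring_nf
  have htq : t ^ (q - 1) * t = t ^ q := by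
    rw [← Real.rpow_add_one ht.ne' (q - 1)]; ring_nf
  have hlhs : (s ^ q) ^ 2 + (t ^ q) ^ 2 - 2 * (s ^ (q - 1) * t ^ (q - 1)) * c
      = θ * (s ^ q - t ^ q) ^ 2 + (1 - θ) * (s ^ q + t ^ q) ^ 2 := by
    have : s ^ (q - 1) * t ^ (q - 1) * c = (2 * θ - 1) * (s ^ q * t ^ q) := by
      rw [hcθ, ← hsq, ← htq]; ring
    nlinarith [this]
  -- endpoint 1
  have hE1 : (s ^ q - t ^ q) ^ 2 ≤ ((s - t) ^ 2) ^ q := by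
    rw [sub8_sq]
    have h := sub8_A hq0.le hq1 hs.le ht.le
    calc (s ^ q - t ^ q) ^ 2 = |s ^ q - t ^ q| ^ 2 := (sq_abs _).symm
      _ ≤ (|s - t| ^ q) ^ 2 := by
          apply pow_le_pow_left₀ (abs_nonneg _) h
  -- endpoint 2
  have hE2 : (s ^ q + t ^ q) ^ 2 ≤ (2 ^ (1 - q)) ^ 2 * ((s + t) ^ 2) ^ q := by
    rw [sub8_sq]
    have h := sub8_B hq0.le hq1 hs.le ht.le
    have habs : |s + t| = s + t := abs_of_nonneg (by linarith)
    rw [habs]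
    calc (s ^ q + t ^ q) ^ 2 ≤ (2 ^ (1 - q) * (s + t) ^ q) ^ 2 := by
          apply pow_le_pow_left₀ (by positivity) h
      _ = (2 ^ (1 - q)) ^ 2 * ((s + t) ^ q) ^ 2 := by ring
  -- concavity
  have hcomb : θ * ((s - t) ^ 2) + (1 - θ) * ((s + t) ^ 2) = s ^ 2 + t ^ 2 - 2 * c := by
    rw [hcθ]; ring
  have hcc := (Real.concaveOn_rpow hq0.le hq1).2 (mem_Ici.2 (sq_nonneg (s - t)))
    (mem_Ici.2 (sq_nonneg (s + t))) hθ0 (by linarith : (0:ℝ) ≤ 1 - θ)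
    (by ring : θ + (1 - θ) = 1)
  simp only [smul_eq_mul] at hcc
  rw [hcomb] at hcc
  have hC1 : (1:ℝ) ≤ (2 ^ (1 - q)) ^ 2 := by
    have : (1:ℝ) ≤ 2 ^ (1 - q) := Real.one_le_rpow (by norm_num) (by linarith)
    nlinarith
  calc (s ^ q) ^ 2 + (t ^ q) ^ 2 - 2 * (s ^ (q - 1) * t ^ (q - 1)) * c
      = θ * (s ^ q - t ^ q) ^ 2 + (1 - θ) * (s ^ q + t ^ q) ^ 2 := hlhs
    _ ≤ θ * ((2 ^ (1 - q)) ^ 2 * ((s - t) ^ 2) ^ q)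
        + (1 - θ) * ((2 ^ (1 - q)) ^ 2 * ((s + t) ^ 2) ^ q) := by
        have e1 : (s ^ q - t ^ q) ^ 2 ≤ (2 ^ (1 - q)) ^ 2 * ((s - t) ^ 2) ^ q := by
          calc (s ^ q - t ^ q) ^ 2 ≤ ((s - t) ^ 2) ^ q := hE1
            _ ≤ (2 ^ (1 - q)) ^ 2 * ((s - t) ^ 2) ^ q := by
                nlinarith [Real.rpow_nonneg (sq_nonneg (s - t)) q]
        exact add_le_add (mul_le_mul_of_nonneg_left e1 hθ0)
          (mul_le_mul_of_nonneg_left hE2 (by linarith))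
    _ = (2 ^ (1 - q)) ^ 2 * (θ * ((s - t) ^ 2) ^ q + (1 - θ) * ((s + t) ^ 2) ^ q) := by ring
    _ ≤ (2 ^ (1 - q)) ^ 2 * (s ^ 2 + t ^ 2 - 2 * c) ^ q := by
        apply mul_le_mul_of_nonneg_left hcc (by positivity)

/-- For `1 < p ≤ 2` there is `C₄ > 0`, depending only on `p`, such that for all
`η, η'` in `ℝ^n` (any `n ≥ 1`) with `|η| + |η'| > 0`,
`| |η|^{p-2} η − |η'|^{p-2} η' | ≤ C₄ |η − η'|^{p-1}`. -/
theorem stmt8 (p : ℝ) (hp1 : 1 < p) (hp2 : p ≤ 2) :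
    ∃ C₄ : ℝ, 0 < C₄ ∧ ∀ (n : ℕ), 1 ≤ n →
      ∀ η η' : EuclideanSpace ℝ (Fin n), 0 < ‖η‖ + ‖η'‖ →
        ‖(‖η‖ ^ (p - 2) : ℝ) • η - (‖η'‖ ^ (p - 2) : ℝ) • η'‖ ≤
          C₄ * ‖η - η'‖ ^ (p - 1) := by
  set C : ℝ := 2 ^ (2 - p) with hC
  have hCpos : 0 < C := Real.rpow_pos_of_pos (by norm_num) _
  have hC1 : 1 ≤ C := Real.one_le_rpow (by norm_num) (by linarith)
  refine ⟨C, hCpos, fun n hn η η' hpos => ?_⟩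
  set q : ℝ := p - 1 with hq
  have hq0 : 0 < q := by simp [hq]; linarith
  have hq1 : q ≤ 1 := by simp [hq]; linarith
  have hCq : C = 2 ^ (1 - q) := by rw [hC, hq]; ring_nf
  by_cases hη : η = 0
  · subst hη
    simp only [norm_zero, smul_zero, zero_sub, norm_neg, zero_add] at hpos ⊢
    rw [norm_smul, Real.norm_eq_abs, abs_of_nonneg (Real.rpow_nonneg (norm_nonneg _) _)]
    have ht : (0:ℝ) < ‖η'‖ := hpos
    have : ‖η'‖ ^ (p - 2) * ‖η'‖ = ‖η'‖ ^ (p - 1) := by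
      rw [← Real.rpow_add_one ht.ne' (p - 2)]; ring_nf
    rw [this]
    nlinarith [Real.rpow_pos_of_pos ht (p - 1)]
  by_cases hη' : η' = 0
  · subst hη'
    simp only [norm_zero, smul_zero, sub_zero, add_zero] at hpos ⊢
    rw [norm_smul, Real.norm_eq_abs, abs_of_nonneg (Real.rpow_nonneg (norm_nonneg _) _)]
    have hs : (0:ℝ) < ‖η‖ := hpos
    have : ‖η‖ ^ (p - 2) * ‖η‖ = ‖η‖ ^ (p - 1) := by
      rw [← Real.rpow_add_one hs.ne' (p - 2)]; ring_nf
    rw [this]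
    nlinarith [Real.rpow_pos_of_pos hs (p - 1)]
  have hs : (0:ℝ) < ‖η‖ := norm_pos_iff.2 hη
  have ht : (0:ℝ) < ‖η'‖ := norm_pos_iff.2 hη'
  set s := ‖η‖
  set t := ‖η'‖
  set c : ℝ := ⟪η, η'⟫ with hcdef
  have hcs : |c| ≤ s * t := abs_real_inner_le_norm η η'
  -- LHS squared
  have hX : ‖(s ^ (p - 2) : ℝ) • η‖ = s ^ q := by
    rw [norm_smul, Real.norm_eq_abs, abs_of_nonneg (Real.rpow_nonneg hs.le _),
      ← Real.rpow_add_one hs.ne' (p - 2)]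
    norm_num [hq]
    ring_nf
  have hY : ‖(t ^ (p - 2) : ℝ) • η'‖ = t ^ q := by
    rw [norm_smul, Real.norm_eq_abs, abs_of_nonneg (Real.rpow_nonneg ht.le _),
      ← Real.rpow_add_one ht.ne' (p - 2)]
    norm_num [hq]
    ring_nf
  have hXY : ⟪(s ^ (p - 2) : ℝ) • η, (t ^ (p - 2) : ℝ) • η'⟫
      = s ^ (q - 1) * t ^ (q - 1) * c := by
    rw [real_inner_smul_left, real_inner_smul_right, ← hcdef]
    have : q - 1 = p - 2 := by rw [hq]; ring
    rw [this]; ring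
  have hLHS2 : ‖(s ^ (p - 2) : ℝ) • η - (t ^ (p - 2) : ℝ) • η'‖ ^ 2
      = (s ^ q) ^ 2 + (t ^ q) ^ 2 - 2 * (s ^ (q - 1) * t ^ (q - 1)) * c := by
    rw [norm_sub_sq_real, hX, hY, hXY]; ring
  have hRHS2 : ‖η - η'‖ ^ 2 = s ^ 2 + t ^ 2 - 2 * c := by
    rw [norm_sub_sq_real, ← hcdef]; ring
  have hkey := sub8_key hq0 hq1 hs ht hcs
  rw [← hLHS2, ← hRHS2, ← hCq] at hkey
  have hfin : (‖η - η'‖ ^ 2 : ℝ) ^ q = (‖η - η'‖ ^ q) ^ 2 := by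
    have := sub8_sq (q := q) ‖η - η'‖
    rwa [abs_of_nonneg (norm_nonneg _)] at this
  rw [hfin] at hkey
  have h2 : ‖(s ^ (p - 2) : ℝ) • η - (t ^ (p - 2) : ℝ) • η'‖ ^ 2
      ≤ (C * ‖η - η'‖ ^ q) ^ 2 := by
    calc ‖(s ^ (p - 2) : ℝ) • η - (t ^ (p - 2) : ℝ) • η'‖ ^ 2
        ≤ C ^ 2 * (‖η - η'‖ ^ q) ^ 2 := hkey
      _ = (C * ‖η - η'‖ ^ q) ^ 2 := by ring
  have hb : 0 ≤ C * ‖η - η'‖ ^ q := by positivity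
  exact (pow_le_pow_iff_left₀ (norm_nonneg _) hb (by norm_num)).1 h2
end
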